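/- (Concentration of balls born in a grid cube) In the d-dimensional torus grid on n vertices, let u be a vertex and r ≥ (4d)^d (log n / log log n)^{1/(d+1)} with r ≤ n^{1/d}/2. If n balls have i.i.d. uniform birthplaces, then the probability that the number of balls born in B̃_u^r exceeds ρ(r) := 4e(d+1)(log n / log log n)^{1/(d+1)}·(3r)^d is at most n^{-3}. Specifically, P[Σ_{v∈B̃_u^r} Z_v ≥ ρ(r)] ≤ C(n, ρ(r))·(|B̃_u^r|/n)^{ρ(r)} ≤ (e·(3r)^d/ρ(r))^{ρ(r)} ≤ n^{-3}. -/

import Mathlib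

open Finset
open scoped Classical Nat

def cdist {m : ℕ} (a b : Fin m) : ℕ :=
  min ((a.1 + m - b.1) % m) ((b.1 + m - a.1) % m)

def tdist {d m : ℕ} (u v : Fin d → Fin m) : ℕ :=
  ∑ i, cdist (u i) (v i)

lemma two_mul_log_le_self {s : ℝ} (hs : 0 < s) : 2 * Real.log s ≤ s := by
  have hw : 0 < Real.sqrt s := Real.sqrt_pos.2 hs
  have h1 : Real.log (Real.sqrt s) ≤ Real.sqrt s - 1 := Real.log_le_sub_one_of_pos hw
  have h2 : Real.log (Real.sqrt s) = Real.log s / 2 := Real.log_sqrt hs.le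
  nlinarith [Real.sq_sqrt hs.le, sq_nonneg (Real.sqrt s - 2)]

lemma log_le_sqrt' {t : ℝ} (ht : 0 < t) : Real.log t ≤ Real.sqrt t := by
  have h := two_mul_log_le_self (Real.sqrt_pos.2 ht)
  rw [Real.log_sqrt ht.le] at h
  linarith

lemma cdist_ball_card {m : ℕ} (r : ℕ) (a : Fin m) :
    (univ.filter (fun x : Fin m => cdist a x ≤ r)).card ≤ 2 * r + 1 := by
  classical
  have key : (univ.filter (fun x : Fin m => cdist a x ≤ r)).card ≤
      (Finset.range (r + 1) ∪ Finset.Ico (m - r) m).card := by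
    apply Finset.card_le_card_of_injOn (fun x => (x.1 + m - a.1) % m)
    · intro x hx
      simp only [mem_coe, mem_filter, mem_univ, true_and] at hx
      have hx1 : x.1 < m := x.2
      have ha1 : a.1 < m := a.2
      have e1 : (x.1 + m - a.1) % m = if a.1 ≤ x.1 then x.1 - a.1 else x.1 + m - a.1 := by
        split_ifs with h
        · have hh : x.1 + m - a.1 = m + (x.1 - a.1) := by omega
          rw [hh, Nat.add_mod_left, Nat.mod_eq_of_lt (by omega)]
        · exact Nat.mod_eq_of_lt (by omega)
      have e2 : (a.1 + m - x.1) % m = if x.1 ≤ a.1 then a.1 - x.1 else a.1 + m - x.1 := by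
        split_ifs with h
        · have hh : a.1 + m - x.1 = m + (a.1 - x.1) := by omega
          rw [hh, Nat.add_mod_left, Nat.mod_eq_of_lt (by omega)]
        · exact Nat.mod_eq_of_lt (by omega)
      unfold cdist at hx
      rw [e1, e2] at hx
      simp only [mem_coe, Finset.mem_union, Finset.mem_range, Finset.mem_Ico]
      rw [e1]
      split_ifs at hx ⊢ with h1 h2 <;> omega
    · intro x hx y hy h
      have hx1 : x.1 < m := x.2
      have hy1 : y.1 < m := y.2
      have ha1 : a.1 < m := a.2
      have ex : (x.1 + m - a.1) % m = if a.1 ≤ x.1 then x.1 - a.1 else x.1 + m - a.1 := by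
        split_ifs with h'
        · have hh : x.1 + m - a.1 = m + (x.1 - a.1) := by omega
          rw [hh, Nat.add_mod_left, Nat.mod_eq_of_lt (by omega)]
        · exact Nat.mod_eq_of_lt (by omega)
      have ey : (y.1 + m - a.1) % m = if a.1 ≤ y.1 then y.1 - a.1 else y.1 + m - a.1 := by
        split_ifs with h'
        · have hh : y.1 + m - a.1 = m + (y.1 - a.1) := by omega
          rw [hh, Nat.add_mod_left, Nat.mod_eq_of_lt (by omega)]
        · exact Nat.mod_eq_of_lt (by omega)
      simp only at h
      rw [ex, ey] at h
      apply Fin.ext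
      split_ifs at h <;> omega
  refine key.trans ?_
  refine (Finset.card_union_le _ _).trans ?_
  rw [Finset.card_range, Nat.card_Ico]
  omega

lemma count_bound (N : ℕ) {V : Type*} [Fintype V] [DecidableEq V] (Bf : Finset V) (k : ℕ) :
    (univ.filter (fun bs : Fin N → V => k ≤ (univ.filter (fun i => bs i ∈ Bf)).card)).card
      ≤ N.choose k * Bf.card ^ k * (Fintype.card V) ^ (N - k) := by
  classical
  have hsub : (univ.filter (fun bs : Fin N → V => k ≤ (univ.filter (fun i => bs i ∈ Bf)).card))
      ⊆ (Finset.powersetCard k (univ : Finset (Fin N))).biUnion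
          (fun S => Fintype.piFinset (fun i => if i ∈ S then Bf else univ)) := by
    intro bs hbs
    simp only [mem_filter, mem_univ, true_and] at hbs
    obtain ⟨S, hS, hScard⟩ := Finset.exists_subset_card_eq hbs
    refine Finset.mem_biUnion.2 ⟨S, Finset.mem_powersetCard_univ.2 hScard, ?_⟩
    simp only [Fintype.mem_piFinset]
    intro i
    split_ifs with h
    · exact (Finset.mem_filter.1 (hS h)).2
    · exact mem_univ _
  have hterm : ∀ S ∈ Finset.powersetCard k (univ : Finset (Fin N)),
      (Fintype.piFinset (fun i => if i ∈ S then Bf else (univ : Finset V))).card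
        = Bf.card ^ k * (Fintype.card V) ^ (N - k) := by
    intro S hS
    have hcard : S.card = k := (Finset.mem_powersetCard.1 hS).2
    rw [Fintype.card_piFinset]
    have hc : ∀ i : Fin N, ((if i ∈ S then Bf else (univ : Finset V)).card)
        = if i ∈ S then Bf.card else Fintype.card V := by
      intro i; split_ifs <;> simp [Finset.card_univ]
    rw [Finset.prod_congr rfl (fun i _ => hc i), Finset.prod_ite, Finset.prod_const,
      Finset.prod_const]
    have h1 : (univ.filter (fun i : Fin N => i ∈ S)).card = k := by
      rw [show univ.filter (fun i : Fin N => i ∈ S) = S by ext i; simp]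
      exact hcard
    have h2 : (univ.filter (fun i : Fin N => ¬ i ∈ S)).card = N - k := by
      have := Finset.card_filter_add_card_filter_not
        (s := (univ : Finset (Fin N))) (p := fun i => i ∈ S)
      simp only [Finset.card_univ, Fintype.card_fin] at this
      omega
    rw [h1, h2]
  calc (univ.filter (fun bs : Fin N → V =>
          k ≤ (univ.filter (fun i => bs i ∈ Bf)).card)).card
      ≤ ((Finset.powersetCard k (univ : Finset (Fin N))).biUnion
          (fun S => Fintype.piFinset (fun i => if i ∈ S then Bf else univ))).card :=
        Finset.card_le_card hsub
    _ ≤ ∑ S ∈ Finset.powersetCard k (univ : Finset (Fin N)),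
          (Fintype.piFinset (fun i => if i ∈ S then Bf else univ)).card :=
        Finset.card_biUnion_le
    _ = ∑ S ∈ Finset.powersetCard k (univ : Finset (Fin N)),
          (Bf.card ^ k * (Fintype.card V) ^ (N - k)) := Finset.sum_congr rfl hterm
    _ = N.choose k * Bf.card ^ k * (Fintype.card V) ^ (N - k) := by
        rw [Finset.sum_const, Finset.card_powersetCard, Finset.card_univ, Fintype.card_fin,
          smul_eq_mul, mul_assoc]

lemma stirling_aux (K : ℕ) : ((K : ℝ)) ^ K ≤ Real.exp 1 ^ K * (K ! : ℝ) := by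
  have h1 : (K : ℝ) ^ K / (K ! : ℝ) ≤ Real.exp K := by
    refine le_trans ?_ (Real.sum_le_exp_of_nonneg (by positivity) (K + 1))
    exact Finset.single_le_sum (f := fun i => (K : ℝ) ^ i / (i ! : ℝ))
      (fun i _ => by positivity) (Finset.self_mem_range_succ K)
  rw [div_le_iff₀ (by positivity : (0:ℝ) < (K ! : ℝ))] at h1
  calc ((K:ℝ)) ^ K ≤ Real.exp K * (K ! : ℝ) := h1
    _ = Real.exp 1 ^ K * (K ! : ℝ) := by rw [← Real.exp_one_pow]

set_option maxHeartbeats 1000000 in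
theorem torus_cube_concentration (d : ℕ) (hd : 1 ≤ d) :
    ∃ n₀ : ℕ, ∀ m : ℕ, 0 < m → n₀ ≤ m ^ d →
      ∀ (u : Fin d → Fin m) (r : ℕ),
        ((4 * d : ℝ) ^ d *
          (Real.log (m ^ d) / Real.log (Real.log (m ^ d))) ^ ((1 : ℝ) / (d + 1))
            ≤ (r : ℝ)) →
        ((r : ℝ) ≤ (m : ℝ) / 2) →
        ((univ.filter (fun bs : Fin (m ^ d) → (Fin d → Fin m) =>
            (4 * Real.exp 1 * (d + 1) *
              (Real.log (m ^ d) / Real.log (Real.log (m ^ d))) ^ ((1 : ℝ) / (d + 1)) *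
              (3 * r : ℝ) ^ d : ℝ)
              ≤ ((univ.filter (fun i => ∀ j, cdist (u j) (bs i j) ≤ r)).card : ℝ))).card
            : ℝ) / ((m : ℝ) ^ d) ^ (m ^ d)
          ≤ ((m : ℝ) ^ d) ^ (-(3 : ℤ)) := by
  refine ⟨16, fun m hm hn u r hr1 hr2 => ?_⟩
  have hd1 : (1:ℝ) ≤ (d:ℝ) := by exact_mod_cast hd
  set Ln : ℝ := Real.log (m ^ d) with hLn_def
  set LLn : ℝ := Real.log Ln with hLLn_def
  set X : ℝ := Ln / LLn with hX_def
  set L : ℝ := X ^ ((1:ℝ)/((d:ℝ)+1)) with hL_def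
  -- basic positivity facts
  have hnR : (16:ℝ) ≤ (m:ℝ) ^ d := by exact_mod_cast hn
  have hnR0 : (0:ℝ) < (m:ℝ) ^ d := by positivity
  have hLn1 : 1 < Ln := by
    rw [hLn_def, Real.lt_log_iff_exp_lt hnR0]
    calc Real.exp 1 < 2.7182818286 := Real.exp_one_lt_d9
      _ ≤ (m:ℝ) ^ d := by linarith
  have hLn0 : 0 < Ln := zero_lt_one.trans hLn1
  have hLLn0 : 0 < LLn := Real.log_pos hLn1
  have hX1 : 1 ≤ X := (one_le_div hLLn0).2 (Real.log_le_self hLn0.le)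
  have hX0 : 0 < X := zero_lt_one.trans_le hX1
  have hL1 : 1 ≤ L := Real.one_le_rpow hX1 (by positivity)
  have hL0 : 0 < L := zero_lt_one.trans_le hL1
  have h4d : (4:ℝ) ≤ (4*(d:ℝ))^d := by
    calc (4:ℝ) = 4^1 := (pow_one 4).symm
      _ ≤ 4^d := pow_le_pow_right₀ (by norm_num) hd
      _ ≤ (4*(d:ℝ))^d := pow_le_pow_left₀ (by norm_num) (by nlinarith) d
  have hr4 : (4:ℝ) ≤ (r:ℝ) := le_trans (by nlinarith) hr1
  have hr1' : 1 ≤ r := by exact_mod_cast (by linarith : (1:ℝ) ≤ (r:ℝ))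
  have hrL : L ≤ 3*(r:ℝ) := by nlinarith
  have h3r0 : (0:ℝ) < 3*(r:ℝ) := by linarith
  -- the ball and its cardinality
  set Bf : Finset (Fin d → Fin m) :=
    univ.filter (fun v => ∀ j, cdist (u j) (v j) ≤ r) with hBf
  have hBfcard : Bf.card ≤ (2*r+1)^d := by
    rw [hBf, show (univ.filter (fun v : Fin d → Fin m => ∀ j, cdist (u j) (v j) ≤ r))
        = Fintype.piFinset (fun j => univ.filter (fun x => cdist (u j) x ≤ r)) from by
          ext v; simp [Fintype.mem_piFinset],
      Fintype.card_piFinset]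
    calc ∏ j, (univ.filter (fun x => cdist (u j) x ≤ r)).card
        ≤ ∏ _j : Fin d, (2*r+1) := Finset.prod_le_prod' (fun j _ => cdist_ball_card r (u j))
      _ = (2*r+1)^d := by rw [Finset.prod_const, Finset.card_univ, Fintype.card_fin]
  have hbR : (Bf.card : ℝ) ≤ (3*(r:ℝ))^d := by
    calc (Bf.card : ℝ) ≤ (((2*r+1)^d : ℕ) : ℝ) := by exact_mod_cast hBfcard
      _ ≤ (3*(r:ℝ))^d := by
          push_cast
          apply pow_le_pow_left₀ (by positivity)
          have : (1:ℝ) ≤ (r:ℝ) := by linarith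
          linarith
  -- rho and K
  set ρ : ℝ := 4 * Real.exp 1 * ((d:ℝ) + 1) * L * (3 * (r:ℝ)) ^ d with hρ
  have hρ0 : 0 < ρ := by
    have h1 := pow_pos h3r0 d
    rw [hρ]
    have h2 : (0:ℝ) < 4 * Real.exp 1 * ((d:ℝ) + 1) * L := by positivity
    exact mul_pos h2 h1
  set K : ℕ := ⌈ρ⌉₊ with hK
  have hK0 : 0 < K := Nat.ceil_pos.2 hρ0
  have hK0R : (0:ℝ) < (K:ℝ) := by exact_mod_cast hK0
  have hKρ : ρ ≤ (K:ℝ) := Nat.le_ceil ρ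
  -- rewrite the filter with the integer threshold
  have hfilter : univ.filter (fun bs : Fin (m^d) → (Fin d → Fin m) =>
        ρ ≤ ((univ.filter (fun i => ∀ j, cdist (u j) (bs i j) ≤ r)).card : ℝ))
      = univ.filter (fun bs : Fin (m^d) → (Fin d → Fin m) =>
        K ≤ (univ.filter (fun i => bs i ∈ Bf)).card) := by
    apply Finset.filter_congr
    intro bs _
    rw [show (univ.filter (fun i => ∀ j, cdist (u j) (bs i j) ≤ r))
        = univ.filter (fun i => bs i ∈ Bf) from
      Finset.filter_congr (fun i _ => by simp [hBf])]
    exact Nat.ceil_le.symm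
  rw [hfilter]
  have hcount := count_bound (m^d) Bf K
  rw [show Fintype.card (Fin d → Fin m) = m ^ d by simp] at hcount
  by_cases hKn : K ≤ m^d
  swap
  · have h0 : Nat.choose (m^d) K = 0 := Nat.choose_eq_zero_of_lt (lt_of_not_ge hKn)
    rw [h0] at hcount
    simp only [Nat.zero_mul, zero_mul, Nat.le_zero] at hcount
    rw [hcount]
    simp only [Nat.cast_zero, zero_div]
    positivity
  · -- main case
    set n : ℕ := m ^ d with hn_def
    have hcountR : ((univ.filter (fun bs : Fin n → (Fin d → Fin m) =>
          K ≤ (univ.filter (fun i => bs i ∈ Bf)).card)).card : ℝ)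
        ≤ (n.choose K : ℝ) * (Bf.card : ℝ)^K * ((m:ℝ)^d)^(n-K) := by
      have := hcount
      calc ((univ.filter (fun bs : Fin n → (Fin d → Fin m) =>
            K ≤ (univ.filter (fun i => bs i ∈ Bf)).card)).card : ℝ)
          ≤ ((n.choose K * Bf.card ^ K * n ^ (n - K) : ℕ) : ℝ) := by exact_mod_cast this
        _ = (n.choose K : ℝ) * (Bf.card : ℝ)^K * ((m:ℝ)^d)^(n-K) := by
            push_cast [hn_def]; ring
    have hchoose : (n.choose K : ℝ) ≤ ((m:ℝ)^d)^K / (K ! : ℝ) := by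
      rw [le_div_iff₀ (by positivity : (0:ℝ) < (K ! : ℝ))]
      have hnat : n.choose K * K ! ≤ n ^ K := by
        rw [mul_comm, ← Nat.descFactorial_eq_factorial_mul_choose]
        exact Nat.descFactorial_le_pow n K
      calc (n.choose K : ℝ) * (K ! : ℝ) = ((n.choose K * K ! : ℕ) : ℝ) := by push_cast; ring
        _ ≤ ((n^K : ℕ) : ℝ) := by exact_mod_cast hnat
        _ = ((m:ℝ)^d)^K := by push_cast [hn_def]; ring
    have hq0 : (0:ℝ) < (4*((d:ℝ)+1)*L)⁻¹ := by positivity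
    have hq1 : (4*((d:ℝ)+1)*L)⁻¹ ≤ 1 := by
      rw [inv_le_one_iff₀]
      right
      nlinarith
    calc ((univ.filter (fun bs : Fin n → (Fin d → Fin m) =>
            K ≤ (univ.filter (fun i => bs i ∈ Bf)).card)).card : ℝ) / ((m:ℝ)^d)^(n)
        ≤ ((n.choose K : ℝ) * (Bf.card : ℝ)^K * ((m:ℝ)^d)^(n-K)) / ((m:ℝ)^d)^(n) := by
          apply div_le_div_of_nonneg_right hcountR (by positivity)
      _ = (n.choose K : ℝ) * (Bf.card : ℝ)^K / ((m:ℝ)^d)^K := by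
          rw [show ((m:ℝ)^d)^(n) = ((m:ℝ)^d)^K * ((m:ℝ)^d)^(n-K) from by
            rw [mul_comm, pow_sub_mul_pow _ hKn]]
          exact mul_div_mul_right _ _ (by positivity)
      _ ≤ (((m:ℝ)^d)^K / (K ! : ℝ)) * (Bf.card : ℝ)^K / ((m:ℝ)^d)^K := by
          gcongr
      _ = (Bf.card : ℝ)^K / (K ! : ℝ) := by
          field_simp
      _ ≤ (Real.exp 1 * (Bf.card:ℝ) / (K:ℝ))^K := by
          rw [div_pow, mul_pow, div_le_div_iff₀ (by positivity) (by positivity : (0:ℝ) < (K:ℝ)^K)]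
          calc (Bf.card:ℝ)^K * (K:ℝ)^K
              ≤ (Bf.card:ℝ)^K * (Real.exp 1 ^ K * (K ! : ℝ)) :=
                mul_le_mul_of_nonneg_left (stirling_aux K) (by positivity)
            _ = Real.exp 1 ^ K * (Bf.card:ℝ)^K * (K ! : ℝ) := by ring
      _ ≤ ((4*((d:ℝ)+1)*L)⁻¹)^K := by
          apply pow_le_pow_left₀ (by positivity)
          rw [div_le_iff₀ hK0R]
          have hqρ : (4*((d:ℝ)+1)*L)⁻¹ * ρ = Real.exp 1 * (3*(r:ℝ))^d := by
            rw [hρ]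
            field_simp
          calc Real.exp 1 * (Bf.card:ℝ) ≤ Real.exp 1 * (3*(r:ℝ))^d := by
                exact mul_le_mul_of_nonneg_left hbR (Real.exp_pos 1).le
            _ = (4*((d:ℝ)+1)*L)⁻¹ * ρ := hqρ.symm
            _ ≤ (4*((d:ℝ)+1)*L)⁻¹ * (K:ℝ) := mul_le_mul_of_nonneg_left hKρ hq0.le
      _ ≤ ((m:ℝ)^d)^(-(3:ℤ)) := by
          rw [← Real.rpow_natCast ((4*((d:ℝ)+1)*L)⁻¹) K]
          refine le_trans (Real.rpow_le_rpow_of_exponent_ge hq0 hq1 hKρ) ?_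
          rw [show ((m:ℝ)^d)^(-(3:ℤ)) = ((m:ℝ)^d) ^ ((-3:ℝ)) from by
            rw [← Real.rpow_intCast]; norm_num]
          rw [Real.rpow_def_of_pos hq0, Real.rpow_def_of_pos hnR0]
          apply Real.exp_le_exp.2
          rw [Real.log_inv]
          -- main analytic inequality
          have hA : LLn/(2*((d:ℝ)+1)) ≤ Real.log (4*((d:ℝ)+1)*L) := by
            have h5 : Real.log L ≤ Real.log (4*((d:ℝ)+1)*L) :=
              Real.log_le_log hL0 (by nlinarith)
            have h6 : Real.log L = (1/((d:ℝ)+1)) * Real.log X := Real.log_rpow hX0 _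
            have h7 : LLn/2 ≤ Real.log X := by
              have h8 : LLn ≤ Real.sqrt Ln := by
                rw [hLLn_def]; exact log_le_sqrt' hLn0
              have hsq : Real.sqrt Ln ≤ X := by
                calc Real.sqrt Ln = Ln / Real.sqrt Ln := Real.div_sqrt.symm
                  _ ≤ Ln / LLn := div_le_div_of_nonneg_left hLn0.le hLLn0 h8
              have h9 : Real.log (Real.sqrt Ln) ≤ Real.log X :=
                Real.log_le_log (Real.sqrt_pos.2 hLn0) hsq
              rw [Real.log_sqrt hLn0.le] at h9
              rw [hLLn_def]
              linarith
            have hd0' : ((d:ℝ)+1) ≠ 0 := by positivity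
            calc LLn/(2*((d:ℝ)+1)) = (1/((d:ℝ)+1)) * (LLn/2) := by rw [div_mul_div_comm, one_mul, mul_comm]
              _ ≤ (1/((d:ℝ)+1)) * Real.log X := by
                  apply mul_le_mul_of_nonneg_left h7 (by positivity)
              _ = Real.log L := h6.symm
              _ ≤ Real.log (4*((d:ℝ)+1)*L) := h5
          have hρX : 4 * Real.exp 1 * ((d:ℝ)+1) * X ≤ ρ := by
            have hpow : L ^ (d+1) = X := by
              rw [hL_def, ← Real.rpow_natCast (X ^ ((1:ℝ)/((d:ℝ)+1))) (d+1),
                ← Real.rpow_mul hX0.le]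
              rw [show (1:ℝ)/((d:ℝ)+1) * ((d+1 : ℕ):ℝ) = 1 from by
                push_cast; field_simp]
              exact Real.rpow_one X
            have h10 : L^d ≤ (3*(r:ℝ))^d := pow_le_pow_left₀ hL0.le hrL d
            calc 4 * Real.exp 1 * ((d:ℝ)+1) * X
                = 4*Real.exp 1*((d:ℝ)+1) * (L^d * L) := by rw [← hpow, pow_succ]
              _ ≤ 4*Real.exp 1*((d:ℝ)+1) * ((3*(r:ℝ))^d * L) := by
                  have := mul_le_mul_of_nonneg_right h10 hL0.le
                  have h11 : (0:ℝ) ≤ 4*Real.exp 1*((d:ℝ)+1) := by positivity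
                  exact mul_le_mul_of_nonneg_left this h11
              _ = ρ := by rw [hρ]; ring
          have hfin : 3 * Ln ≤ ρ * Real.log (4*((d:ℝ)+1)*L) := by
            have hB0 : (0:ℝ) ≤ LLn/(2*((d:ℝ)+1)) := by positivity
            have hprod := mul_le_mul hρX hA hB0 hρ0.le
            have hXL : X * LLn = Ln := div_mul_cancel₀ Ln hLLn0.ne'
            have heq : 4 * Real.exp 1 * ((d:ℝ)+1) * X * (LLn/(2*((d:ℝ)+1)))
                = 2 * Real.exp 1 * Ln := by
              have hd0 : ((d:ℝ)+1) ≠ 0 := by positivity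
              have h12 : 4 * Real.exp 1 * ((d:ℝ)+1) * X * (LLn/(2*((d:ℝ)+1)))
                  = 2 * Real.exp 1 * (X * LLn) := by
                field_simp
                ring
              rw [h12, hXL]
            rw [heq] at hprod
            have he : (2.7182818283:ℝ) < Real.exp 1 := Real.exp_one_gt_d9
            nlinarith
          nlinarith [hfin]
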